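/- Let S₃ be the group of permutations of {1,2,3}. For π ∈ S₃ define the subsets of ℝ³: Λ_π = {x ∈ (0,∞)³ : x_{π(1)} < x_{π(2)} < x_{π(3)}}, Θ_π = {x ∈ (0,∞)³ : x_{π(1)} < x_{π(2)}}, Λ*_π = {a ∈ (0,∞)³ : a_{π(1)} < a_{π(3)} < a_{π(2)}}, Θ*_π = {a ∈ (0,∞)³ : a_{π(1)} < a_{π(3)}}. Then ⋃_{π∈S₃} (Λ_π × Θ*_π) = ⋃_{π∈S₃} (Θ_π × Λ*_π) up to a set of Lebesgue measure 0 in ℝ⁶, and both unions are disjoint. -/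

import Mathlib

open MeasureTheory Set

/-- `Λ_π = {x ∈ (0,∞)³ : x_{π(1)} < x_{π(2)} < x_{π(3)}}`. -/
def brunL (π : Equiv.Perm (Fin 3)) : Set (Fin 3 → ℝ) :=
  {x | (∀ i, 0 < x i) ∧ x (π 0) < x (π 1) ∧ x (π 1) < x (π 2)}

/-- `Θ_π = {x ∈ (0,∞)³ : x_{π(1)} < x_{π(2)}}`. -/
def brunTh (π : Equiv.Perm (Fin 3)) : Set (Fin 3 → ℝ) :=
  {x | (∀ i, 0 < x i) ∧ x (π 0) < x (π 1)}

/-- `Λ*_π = {a ∈ (0,∞)³ : a_{π(1)} < a_{π(3)} < a_{π(2)}}`. -/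
def brunLS (π : Equiv.Perm (Fin 3)) : Set (Fin 3 → ℝ) :=
  {a | (∀ i, 0 < a i) ∧ a (π 0) < a (π 2) ∧ a (π 2) < a (π 1)}

/-- `Θ*_π = {a ∈ (0,∞)³ : a_{π(1)} < a_{π(3)}}`. -/
def brunThS (π : Equiv.Perm (Fin 3)) : Set (Fin 3 → ℝ) :=
  {a | (∀ i, 0 < a i) ∧ a (π 0) < a (π 2)}

private lemma tri3 : ∀ j : Fin 3, j = 0 ∨ j = 1 ∨ j = 2 := by decide

private lemma perm_range (π ρ : Equiv.Perm (Fin 3)) :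
    ∀ k : Fin 3, ρ k = π 0 ∨ ρ k = π 1 ∨ ρ k = π 2 := by
  intro k
  rcases tri3 (π.symm (ρ k)) with h | h | h
  · left; rw [← h, Equiv.apply_symm_apply]
  · right; left; rw [← h, Equiv.apply_symm_apply]
  · right; right; rw [← h, Equiv.apply_symm_apply]

private lemma exists_sort3 (x : Fin 3 → ℝ) (h : ∀ i j : Fin 3, i ≠ j → x i ≠ x j) :
    ∃ π : Equiv.Perm (Fin 3), x (π 0) < x (π 1) ∧ x (π 1) < x (π 2) := by
  refine ⟨Tuple.sort x, ?_, ?_⟩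
  · refine lt_of_le_of_ne (Tuple.monotone_sort x (by decide : (0:Fin 3) ≤ 1)) ?_
    exact h _ _ (fun he => absurd ((Tuple.sort x).injective he) (by decide))
  · refine lt_of_le_of_ne (Tuple.monotone_sort x (by decide : (1:Fin 3) ≤ 2)) ?_
    exact h _ _ (fun he => absurd ((Tuple.sort x).injective he) (by decide))

private lemma key3 (x a : Fin 3 → ℝ) (π ρ : Equiv.Perm (Fin 3))
    (hx1 : x (π 0) < x (π 1)) (hx2 : x (π 1) < x (π 2))
    (ha1 : a (ρ 0) < a (ρ 1)) (ha2 : a (ρ 1) < a (ρ 2))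
    (h : a (π 0) < a (π 2)) : x (ρ 0) < x (ρ 2) := by
  rcases perm_range π ρ 0 with h0 | h0 | h0 <;>
  rcases perm_range π ρ 1 with h1 | h1 | h1 <;>
  rcases perm_range π ρ 2 with h2 | h2 | h2 <;>
  simp only [h0, h1, h2] at ha1 ha2 ⊢ <;> linarith

private lemma sort_unique3 (x : Fin 3 → ℝ) (π σ : Equiv.Perm (Fin 3))
    (hπ1 : x (π 0) < x (π 1)) (hπ2 : x (π 1) < x (π 2))
    (hσ1 : x (σ 0) < x (σ 1)) (hσ2 : x (σ 1) < x (σ 2)) : π = σ := by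
  rcases perm_range π σ 0 with h0 | h0 | h0 <;>
  rcases perm_range π σ 1 with h1 | h1 | h1 <;>
  rcases perm_range π σ 2 with h2 | h2 | h2 <;>
  simp only [h0, h1, h2] at hσ1 hσ2 <;>
  first
  | linarith
  | exact Equiv.ext fun i => by
      rcases tri3 i with rfl | rfl | rfl
      exacts [h0.symm, h1.symm, h2.symm]

private lemma sortS_unique3 (a : Fin 3 → ℝ) (π σ : Equiv.Perm (Fin 3))
    (hπ1 : a (π 0) < a (π 2)) (hπ2 : a (π 2) < a (π 1))
    (hσ1 : a (σ 0) < a (σ 2)) (hσ2 : a (σ 2) < a (σ 1)) : π = σ := by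
  rcases perm_range π σ 0 with h0 | h0 | h0 <;>
  rcases perm_range π σ 1 with h1 | h1 | h1 <;>
  rcases perm_range π σ 2 with h2 | h2 | h2 <;>
  simp only [h0, h1, h2] at hσ1 hσ2 <;>
  first
  | linarith
  | exact Equiv.ext fun i => by
      rcases tri3 i with rfl | rfl | rfl
      exacts [h0.symm, h1.symm, h2.symm]

private lemma hyperplane_null (i j : Fin 3) (hij : i ≠ j) :
    volume {x : Fin 3 → ℝ | x i = x j} = 0 := by
  have heq : {x : Fin 3 → ℝ | x i = x j} =
      (LinearMap.ker ((LinearMap.proj i : (Fin 3 → ℝ) →ₗ[ℝ] ℝ) - LinearMap.proj j) :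
        Submodule ℝ (Fin 3 → ℝ)) := by
    ext x
    simp [LinearMap.mem_ker, sub_eq_zero]
  rw [heq]
  refine Measure.addHaar_submodule _ _ (fun htop => ?_)
  have hmem := Submodule.eq_top_iff'.mp htop (Pi.single j 1)
  simp only [LinearMap.mem_ker, LinearMap.sub_apply, LinearMap.proj_apply,
    Pi.single_eq_same, Pi.single_eq_of_ne hij, sub_eq_zero] at hmem
  exact zero_ne_one hmem

private def swapPerm (ρ : Equiv.Perm (Fin 3)) : Equiv.Perm (Fin 3) := ρ * Equiv.swap 1 2

private lemma swapPerm0 (ρ : Equiv.Perm (Fin 3)) : swapPerm ρ 0 = ρ 0 := by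
  rw [swapPerm, Equiv.Perm.mul_apply, show (Equiv.swap (1:Fin 3) 2) 0 = 0 from by decide]

private lemma swapPerm1 (ρ : Equiv.Perm (Fin 3)) : swapPerm ρ 1 = ρ 2 := by
  rw [swapPerm, Equiv.Perm.mul_apply, show (Equiv.swap (1:Fin 3) 2) 1 = 2 from by decide]

private lemma swapPerm2 (ρ : Equiv.Perm (Fin 3)) : swapPerm ρ 2 = ρ 1 := by
  rw [swapPerm, Equiv.Perm.mul_apply, show (Equiv.swap (1:Fin 3) 2) 2 = 1 from by decide]

private lemma good_iff (x a : Fin 3 → ℝ)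
    (hx : ∀ i j : Fin 3, i ≠ j → x i ≠ x j)
    (ha : ∀ i j : Fin 3, i ≠ j → a i ≠ a j) :
    ((x, a) ∈ ⋃ π : Equiv.Perm (Fin 3), brunL π ×ˢ brunThS π) ↔
      ((x, a) ∈ ⋃ π : Equiv.Perm (Fin 3), brunTh π ×ˢ brunLS π) := by
  simp only [mem_iUnion, Set.mem_prod]
  constructor
  · rintro ⟨π, ⟨hxpos, hx1, hx2⟩, ⟨hapos, hlt⟩⟩
    obtain ⟨ρ, ha1, ha2⟩ := exists_sort3 a ha
    refine ⟨swapPerm ρ, ⟨hxpos, ?_⟩, ⟨hapos, ?_, ?_⟩⟩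
    · rw [swapPerm0, swapPerm1]
      exact key3 x a π ρ hx1 hx2 ha1 ha2 hlt
    · rw [swapPerm0, swapPerm2]; exact ha1
    · rw [swapPerm2, swapPerm1]; exact ha2
  · rintro ⟨σ, ⟨hxpos, hxlt⟩, ⟨hapos, ha1, ha2⟩⟩
    obtain ⟨π, hx1, hx2⟩ := exists_sort3 x hx
    refine ⟨π, ⟨hxpos, hx1, hx2⟩, ⟨hapos, ?_⟩⟩
    refine key3 a x (swapPerm σ) π ?_ ?_ hx1 hx2 ?_
    · rw [swapPerm0, swapPerm1]; exact ha1
    · rw [swapPerm1, swapPerm2]; exact ha2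
    · rw [swapPerm0, swapPerm2]; exact hxlt

/-- The unions `⋃_π Λ_π × Θ*_π` and `⋃_π Θ_π × Λ*_π` agree up to a set of Lebesgue
measure zero in `ℝ⁶ = ℝ³ × ℝ³`, and both unions are disjoint. -/
theorem stmt_13 :
    (∀ π σ : Equiv.Perm (Fin 3), π ≠ σ →
      Disjoint (brunL π ×ˢ brunThS π) (brunL σ ×ˢ brunThS σ)) ∧
    (∀ π σ : Equiv.Perm (Fin 3), π ≠ σ →
      Disjoint (brunTh π ×ˢ brunLS π) (brunTh σ ×ˢ brunLS σ)) ∧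
    volume
      (((⋃ π : Equiv.Perm (Fin 3), brunL π ×ˢ brunThS π) \
        (⋃ π : Equiv.Perm (Fin 3), brunTh π ×ˢ brunLS π)) ∪
       ((⋃ π : Equiv.Perm (Fin 3), brunTh π ×ˢ brunLS π) \
        (⋃ π : Equiv.Perm (Fin 3), brunL π ×ˢ brunThS π))) = 0 := by
  refine ⟨?_, ?_, ?_⟩
  · intro π σ hne
    rw [Set.disjoint_left]
    rintro ⟨x, a⟩ ⟨⟨_, hx1, hx2⟩, -⟩ ⟨⟨_, hx1', hx2'⟩, -⟩
    exact hne (sort_unique3 x π σ hx1 hx2 hx1' hx2')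
  · intro π σ hne
    rw [Set.disjoint_left]
    rintro ⟨x, a⟩ ⟨-, ⟨_, ha1, ha2⟩⟩ ⟨-, ⟨_, ha1', ha2'⟩⟩
    exact hne (sortS_unique3 a π σ ha1 ha2 ha1' ha2')
  · set B : Set ((Fin 3 → ℝ) × (Fin 3 → ℝ)) :=
      ⋃ (i : Fin 3), ⋃ (j : Fin 3), ⋃ (_ : i ≠ j),
        ({x : Fin 3 → ℝ | x i = x j} ×ˢ (univ : Set (Fin 3 → ℝ)) ∪
         (univ : Set (Fin 3 → ℝ)) ×ˢ {a : Fin 3 → ℝ | a i = a j}) with hB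
    have hBnull : volume B = 0 := by
      refine measure_iUnion_null fun i => measure_iUnion_null fun j =>
        measure_iUnion_null fun hij => measure_union_null ?_ ?_
      · rw [Measure.volume_eq_prod, Measure.prod_prod, hyperplane_null i j hij, zero_mul]
      · rw [Measure.volume_eq_prod, Measure.prod_prod, hyperplane_null i j hij, mul_zero]
    refine measure_mono_null ?_ hBnull
    rintro ⟨x, a⟩ hp
    by_contra hnB
    have hgood : (∀ i j : Fin 3, i ≠ j → x i ≠ x j) ∧ ∀ i j : Fin 3, i ≠ j → a i ≠ a j := by
      simp only [hB, mem_iUnion, Set.mem_union, Set.mem_prod, mem_setOf_eq, mem_univ,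
        and_true, true_and, not_exists, not_or] at hnB
      exact ⟨fun i j hij => (hnB i j hij).1, fun i j hij => (hnB i j hij).2⟩
    have hiff := good_iff x a hgood.1 hgood.2
    rcases hp with ⟨h1, h2⟩ | ⟨h1, h2⟩
    · exact h2 (hiff.mp h1)
    · exact h2 (hiff.mpr h1)
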